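/- The lattices Ad(T) are not semimodular in general: there exist a finite set I (one may take |I| = 4), a tree T on I, and elements x, y ∈ Ad(T) such that x and y both cover x ∧ y, but x ∨ y does not cover x. -/
import Mathlib


open Finset

/-- A rooted binary tree with leaves labeled in `α`. -/
inductive BTree (α : Type) : Type where
  | leaf : α → BTree α
  | node : BTree α → BTree α → BTree α

namespace BTree

variable {α : Type} [DecidableEq α]

/-- The list of leaf labels of the tree. -/
def leafList : BTree α → List α
  | .leaf a => [a]
  | .node l r => l.leafList ++ r.leafList

/-- The set of leaf labels of the tree. -/
def leaves (t : BTree α) : Finset α := t.leafList.toFinset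

/-- `t` is a tree on the finite set `I`: its leaves are labeled bijectively by `I`. -/
def IsTreeOn (t : BTree α) (I : Finset α) : Prop :=
  t.leafList.Nodup ∧ t.leaves = I

/-- The set `V(t)` of internal vertices of the tree, each internal vertex being
represented by the set of its ancestor leaves (the leaf labels of the subtree
rooted there).  In this representation a vertex `v` is below a vertex `w` in the
ancestor order (i.e. `w` lies on the path from `v` to the root) exactly when
`v ⊆ w`. -/
def vertexSet : BTree α → Finset (Finset α)
  | .leaf _ => ∅
  | .node l r => insert (l.leaves ∪ r.leaves) (l.vertexSet ∪ r.vertexSet)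

/-- The list of internal vertices of the tree, recorded as the pairs
(left subtree, right subtree) hanging at each internal vertex. -/
def nodes : BTree α → List (BTree α × BTree α)
  | .leaf _ => []
  | .node l r => (l, r) :: (l.nodes ++ r.nodes)

/-- `meetVertex t i j` is the internal vertex `v_{(i,j)}` at which the paths from the
leaves labeled `i` and `j` towards the root first meet (as the set of its ancestor
leaves); meaningful when `i ≠ j` are both leaf labels of `t`. -/
def meetVertex : BTree α → α → α → Finset α
  | .leaf a, _, _ => {a}
  | .node l r, i, j =>
    if i ∈ l.leaves ∧ j ∈ l.leaves then l.meetVertex i j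
    else if i ∈ r.leaves ∧ j ∈ r.leaves then r.meetVertex i j
    else l.leaves ∪ r.leaves

/-- `S(J) = { v_{(i,j)} : i, j ∈ J, i ≠ j }`. -/
def S (t : BTree α) (J : Finset α) : Finset (Finset α) :=
  ((J ×ˢ J).filter fun p => p.1 ≠ p.2).image fun p => t.meetVertex p.1 p.2

/-- A partition `π` of `I` is `T`-admissible when `S(B) ∩ S(B') = ∅` for every pair of
distinct blocks `B, B'` of `π`. -/
def Admissible (t : BTree α) {I : Finset α} (π : Finpartition I) : Prop :=
  ∀ B ∈ π.parts, ∀ C ∈ π.parts, B ≠ C → t.S B ∩ t.S C = ∅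

/-- A nice total order on the internal vertices of `T`, encoded by an integer-valued
ranking function: it is injective on `V(T)` and is a linear extension of the ancestor
order (a vertex `v` is below `w`, i.e. `w` is on the path from `v` to the root, iff
`v ⊆ w` in the ancestor-leaves representation). -/
def IsNiceOrder (t : BTree α) (ord : Finset α → ℕ) : Prop :=
  Set.InjOn ord ↑t.vertexSet ∧
    ∀ v ∈ t.vertexSet, ∀ w ∈ t.vertexSet, v ⊆ w → ord v ≤ ord w

/-- A nice total order identifying `V(T)` with `{1, …, n}`. -/
def IsNiceLabeling (t : BTree α) (n : ℕ) (ord : Finset α → ℕ) : Prop :=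
  t.IsNiceOrder ord ∧ t.vertexSet.image ord = Finset.Icc 1 n

end BTree

/-- The poset `Ad(T)` of `T`-admissible partitions of `I`, ordered by refinement
(the order is inherited from the refinement order on `Finpartition I`). -/
def AdPartition {α : Type} [DecidableEq α] (T : BTree α) (I : Finset α) : Type :=
  {π : Finpartition I // T.Admissible π}

namespace AdPartition

variable {α : Type} [DecidableEq α] {T : BTree α} {I : Finset α}

instance : PartialOrder (AdPartition T I) := Subtype.partialOrder _

/-- The set `V(π)` of internal vertices of a partition: the union of the `S(B)` over
the blocks `B` of `π`. -/
def verts (T : BTree α) {I : Finset α} (π : Finpartition I) : Finset (Finset α) :=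
  π.parts.sup fun B => T.S B

/-- The edge label `λ(π, τ)` of a covering relation `π ⋖ τ` in `Ad(T)`: the unique
internal vertex `v` with `V(τ) = V(π) ∪ {v}` (extracted here as the union of the
finset `V(τ) \ V(π)`, which is the singleton `{v}` when `π ⋖ τ`). -/
def label (T : BTree α) {I : Finset α} (π τ : AdPartition T I) : Finset α :=
  (verts T τ.1 \ verts T π.1).sup id

/-- The label sequence, with respect to a nice order `ord`, of a saturated chain
recorded as a list of consecutive elements. -/
def labelSeq (T : BTree α) {I : Finset α} (ord : Finset α → ℕ)
    (c : List (AdPartition T I)) : List ℕ :=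
  (c.zip c.tail).map fun p => ord (label T p.1 p.2)

/-- The atom of `Ad(T)` whose unique doubleton block is `{p, q}`, all other blocks
being singletons. -/
def IsAtomPart (T : BTree α) (I : Finset α) (a : AdPartition T I) (p q : α) : Prop :=
  p ≠ q ∧ a.1.parts = insert {p, q} ((I \ {p, q}).image fun x => ({x} : Finset α))

end AdPartition

section LatticeGen

variable {P : Type*} [PartialOrder P]

/-- A subset of a partial order closed under existing pairwise joins and meets. -/
def IsLatClosed (D : Set P) : Prop :=
  (∀ x ∈ D, ∀ y ∈ D, ∀ z, IsLUB {x, y} z → z ∈ D) ∧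
    (∀ x ∈ D, ∀ y ∈ D, ∀ z, IsGLB {x, y} z → z ∈ D)

/-- The sublattice generated by a subset of a partial order: the smallest subset
containing it that is closed under pairwise joins and meets. -/
def latticeGen (s : Set P) : Set P :=
  ⋂₀ {D : Set P | s ⊆ D ∧ IsLatClosed D}

/-- The subset `D`, with the induced join and meet, is a distributive lattice:
`x ∧ (y ∨ z) = (x ∧ y) ∨ (x ∧ z)` for all `x, y, z ∈ D`. -/
def IsDistribSet (D : Set P) : Prop :=
  ∀ x ∈ D, ∀ y ∈ D, ∀ z ∈ D,
    ∀ yz, IsLUB {y, z} yz → ∀ w, IsGLB {x, yz} w →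
      ∀ xy, IsGLB {x, y} xy → ∀ xz, IsGLB {x, z} xz →
        ∀ u, IsLUB {xy, xz} u → w = u

end LatticeGen


section Example9
open BTree AdPartition

def T9 : BTree ℕ := .node (.node (.leaf 1) (.leaf 2)) (.node (.leaf 3) (.leaf 4))
def I9 : Finset ℕ := {1,2,3,4}

def mkP (ps : Finset (Finset ℕ)) (h1 : ∀ i ∈ ps, Disjoint i ((ps.erase i).sup id))
    (h2 : ps.sup id = I9) (h3 : ⊥ ∉ ps) : Finpartition I9 :=
  ⟨ps, Finset.supIndep_iff_disjoint_erase.mpr h1, h2, h3⟩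

def pbot9 : Finpartition I9 := mkP {{1},{2},{3},{4}} (by decide) (by decide) (by decide)
def px9 : Finpartition I9 := mkP {{1},{2,3},{4}} (by decide) (by decide) (by decide)
def py9 : Finpartition I9 := mkP {{1,4},{2},{3}} (by decide) (by decide) (by decide)
def pz9 : Finpartition I9 := mkP {{1},{2,3,4}} (by decide) (by decide) (by decide)
def ptop9 : Finpartition I9 := mkP {{1,2,3,4}} (by decide) (by decide) (by decide)

lemma adm_pbot9 : T9.Admissible pbot9 := by
  show ∀ B ∈ _, ∀ C ∈ _, B ≠ C → T9.S B ∩ T9.S C = ∅; decide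
lemma adm_px9 : T9.Admissible px9 := by
  show ∀ B ∈ _, ∀ C ∈ _, B ≠ C → T9.S B ∩ T9.S C = ∅; decide
lemma adm_py9 : T9.Admissible py9 := by
  show ∀ B ∈ _, ∀ C ∈ _, B ≠ C → T9.S B ∩ T9.S C = ∅; decide
lemma adm_pz9 : T9.Admissible pz9 := by
  show ∀ B ∈ _, ∀ C ∈ _, B ≠ C → T9.S B ∩ T9.S C = ∅; decide
lemma adm_ptop9 : T9.Admissible ptop9 := by
  show ∀ B ∈ _, ∀ C ∈ _, B ≠ C → T9.S B ∩ T9.S C = ∅; decide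

lemma keyA (π : Finpartition I9) (h : π ≤ px9) :
    ∀ b ∈ π.parts, b = {1} ∨ b = {2} ∨ b = {3} ∨ b = {2,3} ∨ b = {4} := by
  intro b hb
  obtain ⟨c, hc, hbc⟩ := h hb
  have hne : b ≠ ∅ := π.ne_bot hb
  have hc' : c ∈ ({{1},{2,3},{4}} : Finset (Finset ℕ)) := hc
  fin_cases hc' <;>
  · have hp := Finset.mem_powerset.mpr hbc
    fin_cases hp <;> simp_all <;> tauto

lemma classA (π : Finpartition I9) (h : π ≤ px9) : π = pbot9 ∨ π = px9 := by
  have key := keyA π h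
  have h1 : {1} ∈ π.parts := by
    obtain ⟨t, ht, h1t⟩ := π.exists_mem (show 1 ∈ I9 by decide)
    rcases key t ht with rfl|rfl|rfl|rfl|rfl <;> first | exact ht | exact absurd h1t (by decide)
  have h4 : {4} ∈ π.parts := by
    obtain ⟨t, ht, h4t⟩ := π.exists_mem (show 4 ∈ I9 by decide)
    rcases key t ht with rfl|rfl|rfl|rfl|rfl <;> first | exact ht | exact absurd h4t (by decide)
  by_cases h23 : ({2,3} : Finset ℕ) ∈ π.parts
  · right
    apply Finpartition.ext
    apply Finset.Subset.antisymm
    · intro b hb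
      rcases key b hb with rfl|rfl|rfl|rfl|rfl
      · exact (by decide : ({1}:Finset ℕ) ∈ px9.parts)
      · exact absurd (π.eq_of_mem_parts hb h23 (show (2:ℕ) ∈ ({2}:Finset ℕ) by decide)
          (show (2:ℕ) ∈ ({2,3}:Finset ℕ) by decide)) (by decide)
      · exact absurd (π.eq_of_mem_parts hb h23 (show (3:ℕ) ∈ ({3}:Finset ℕ) by decide)
          (show (3:ℕ) ∈ ({2,3}:Finset ℕ) by decide)) (by decide)
      · exact (by decide : ({2,3}:Finset ℕ) ∈ px9.parts)
      · exact (by decide : ({4}:Finset ℕ) ∈ px9.parts)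
    · intro b hb
      have hb' : b ∈ ({{1},{2,3},{4}} : Finset (Finset ℕ)) := hb
      fin_cases hb' <;> first | exact h1 | exact h23 | exact h4
  · left
    have h2 : {2} ∈ π.parts := by
      obtain ⟨t, ht, h2t⟩ := π.exists_mem (show 2 ∈ I9 by decide)
      rcases key t ht with rfl|rfl|rfl|rfl|rfl <;>
        first | exact ht | exact absurd h2t (by decide) | exact absurd ht h23
    have h3 : {3} ∈ π.parts := by
      obtain ⟨t, ht, h3t⟩ := π.exists_mem (show 3 ∈ I9 by decide)
      rcases key t ht with rfl|rfl|rfl|rfl|rfl <;>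
        first | exact ht | exact absurd h3t (by decide) | exact absurd ht h23
    apply Finpartition.ext
    apply Finset.Subset.antisymm
    · intro b hb
      rcases key b hb with rfl|rfl|rfl|rfl|rfl
      · exact (by decide : ({1}:Finset ℕ) ∈ pbot9.parts)
      · exact (by decide : ({2}:Finset ℕ) ∈ pbot9.parts)
      · exact (by decide : ({3}:Finset ℕ) ∈ pbot9.parts)
      · exact absurd hb h23
      · exact (by decide : ({4}:Finset ℕ) ∈ pbot9.parts)
    · intro b hb
      have hb' : b ∈ ({{1},{2},{3},{4}} : Finset (Finset ℕ)) := hb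
      fin_cases hb' <;> first | exact h1 | exact h2 | exact h3 | exact h4

lemma keyB (π : Finpartition I9) (h : π ≤ py9) :
    ∀ b ∈ π.parts, b = {1} ∨ b = {4} ∨ b = {1,4} ∨ b = {2} ∨ b = {3} := by
  intro b hb
  obtain ⟨c, hc, hbc⟩ := h hb
  have hne : b ≠ ∅ := π.ne_bot hb
  have hc' : c ∈ ({{1,4},{2},{3}} : Finset (Finset ℕ)) := hc
  fin_cases hc' <;>
  · have hp := Finset.mem_powerset.mpr hbc
    fin_cases hp <;> simp_all <;> tauto

lemma classB (π : Finpartition I9) (h : π ≤ py9) : π = pbot9 ∨ π = py9 := by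
  have key := keyB π h
  have h2 : {2} ∈ π.parts := by
    obtain ⟨t, ht, h2t⟩ := π.exists_mem (show 2 ∈ I9 by decide)
    rcases key t ht with rfl|rfl|rfl|rfl|rfl <;> first | exact ht | exact absurd h2t (by decide)
  have h3 : {3} ∈ π.parts := by
    obtain ⟨t, ht, h3t⟩ := π.exists_mem (show 3 ∈ I9 by decide)
    rcases key t ht with rfl|rfl|rfl|rfl|rfl <;> first | exact ht | exact absurd h3t (by decide)
  by_cases h14 : ({1,4} : Finset ℕ) ∈ π.parts
  · right
    apply Finpartition.ext
    apply Finset.Subset.antisymm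
    · intro b hb
      rcases key b hb with rfl|rfl|rfl|rfl|rfl
      · exact absurd (π.eq_of_mem_parts hb h14 (show (1:ℕ) ∈ ({1}:Finset ℕ) by decide)
          (show (1:ℕ) ∈ ({1,4}:Finset ℕ) by decide)) (by decide)
      · exact absurd (π.eq_of_mem_parts hb h14 (show (4:ℕ) ∈ ({4}:Finset ℕ) by decide)
          (show (4:ℕ) ∈ ({1,4}:Finset ℕ) by decide)) (by decide)
      · exact (by decide : ({1,4}:Finset ℕ) ∈ py9.parts)
      · exact (by decide : ({2}:Finset ℕ) ∈ py9.parts)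
      · exact (by decide : ({3}:Finset ℕ) ∈ py9.parts)
    · intro b hb
      have hb' : b ∈ ({{1,4},{2},{3}} : Finset (Finset ℕ)) := hb
      fin_cases hb' <;> first | exact h14 | exact h2 | exact h3
  · left
    have h1 : {1} ∈ π.parts := by
      obtain ⟨t, ht, h1t⟩ := π.exists_mem (show 1 ∈ I9 by decide)
      rcases key t ht with rfl|rfl|rfl|rfl|rfl <;>
        first | exact ht | exact absurd h1t (by decide) | exact absurd ht h14
    have h4 : {4} ∈ π.parts := by
      obtain ⟨t, ht, h4t⟩ := π.exists_mem (show 4 ∈ I9 by decide)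
      rcases key t ht with rfl|rfl|rfl|rfl|rfl <;>
        first | exact ht | exact absurd h4t (by decide) | exact absurd ht h14
    apply Finpartition.ext
    apply Finset.Subset.antisymm
    · intro b hb
      rcases key b hb with rfl|rfl|rfl|rfl|rfl
      · exact (by decide : ({1}:Finset ℕ) ∈ pbot9.parts)
      · exact (by decide : ({4}:Finset ℕ) ∈ pbot9.parts)
      · exact absurd hb h14
      · exact (by decide : ({2}:Finset ℕ) ∈ pbot9.parts)
      · exact (by decide : ({3}:Finset ℕ) ∈ pbot9.parts)
    · intro b hb
      have hb' : b ∈ ({{1},{2},{3},{4}} : Finset (Finset ℕ)) := hb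
      fin_cases hb' <;> first | exact h1 | exact h2 | exact h3 | exact h4

lemma classC (π : Finpartition I9) (hadm : T9.Admissible π)
    (hx : px9 ≤ π) (hy : py9 ≤ π) : π = ptop9 := by
  obtain ⟨b, hb, hb23⟩ := hx (show ({2,3}:Finset ℕ) ∈ px9.parts by decide)
  obtain ⟨c, hc, hc14⟩ := hy (show ({1,4}:Finset ℕ) ∈ py9.parts by decide)
  have h2b : 2 ∈ b := hb23 (by decide)
  have h3b : 3 ∈ b := hb23 (by decide)
  have h1c : 1 ∈ c := hc14 (by decide)
  have h4c : 4 ∈ c := hc14 (by decide)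
  by_cases hbc : b = c
  · subst hbc
    have hbI : b ⊆ I9 := π.le hb
    have hIb : I9 ⊆ b := by
      intro x hx
      have hx' : x ∈ ({1,2,3,4} : Finset ℕ) := hx
      fin_cases hx' <;> assumption
    have hbeq : b = I9 := Finset.Subset.antisymm hbI hIb
    apply Finpartition.ext
    apply Finset.Subset.antisymm
    · intro d hd
      obtain ⟨x, hx⟩ := π.nonempty_of_mem_parts hd
      have hxI : x ∈ I9 := π.le hd hx
      have : d = b := π.eq_of_mem_parts hd hb hx (hbeq ▸ hxI)
      subst this
      rw [hbeq]
      decide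
    · intro d hd
      have hd' : d ∈ ({{1,2,3,4}} : Finset (Finset ℕ)) := hd
      rw [Finset.mem_singleton] at hd'
      subst hd'
      have hh : I9 ∈ π.parts := hbeq ▸ hb
      exact hh
  · exfalso
    have hdisj : Disjoint b c := π.disjoint hb hc hbc
    have hbI : b ⊆ I9 := π.le hb
    have hcI : c ⊆ I9 := π.le hc
    have hbeq : b = {2,3} := by
      apply Finset.Subset.antisymm _ hb23
      intro x hx
      have hx' : x ∈ ({1,2,3,4} : Finset ℕ) := hbI hx
      fin_cases hx'
      · exact (Finset.disjoint_left.mp hdisj hx h1c).elim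
      · decide
      · decide
      · exact (Finset.disjoint_left.mp hdisj hx h4c).elim
    have hceq : c = {1,4} := by
      apply Finset.Subset.antisymm _ hc14
      intro x hx
      have hx' : x ∈ ({1,2,3,4} : Finset ℕ) := hcI hx
      fin_cases hx'
      · decide
      · exact (Finset.disjoint_right.mp hdisj hx h2b).elim
      · exact (Finset.disjoint_right.mp hdisj hx h3b).elim
      · decide
    have := hadm b hb c hc hbc
    rw [hbeq, hceq] at this
    exact absurd this (by decide)

lemma le_px9 : pbot9 ≤ px9 := show ∀ ⦃b⦄, b ∈ pbot9.parts → ∃ c ∈ px9.parts, b ≤ c by decide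
lemma le_py9 : pbot9 ≤ py9 := show ∀ ⦃b⦄, b ∈ pbot9.parts → ∃ c ∈ py9.parts, b ≤ c by decide
lemma px9_le_pz9 : px9 ≤ pz9 := show ∀ ⦃b⦄, b ∈ px9.parts → ∃ c ∈ pz9.parts, b ≤ c by decide
lemma pz9_le_ptop9 : pz9 ≤ ptop9 :=
  show ∀ ⦃b⦄, b ∈ pz9.parts → ∃ c ∈ ptop9.parts, b ≤ c by decide

lemma ne_parts {P Q : Finpartition I9} (h : P.parts ≠ Q.parts) : P ≠ Q :=
  fun hh => h (congrArg Finpartition.parts hh)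

end Example9

/-- the lattices `Ad(T)` are not semimodular in general: there are a
finite set `I` with `|I| = 4`, a tree `T` on `I`, and `x, y ∈ Ad(T)` such that `x`
and `y` both cover `x ∧ y` but `x ∨ y` does not cover `x`. -/
theorem stmt9 :
    ∃ (I : Finset ℕ) (T : BTree ℕ), T.IsTreeOn I ∧ I.card = 4 ∧
      ∃ x y : AdPartition T I, ∃ m : AdPartition T I,
        IsGLB ({x, y} : Set (AdPartition T I)) m ∧ m ⋖ x ∧ m ⋖ y ∧
        ∀ j : AdPartition T I, IsLUB ({x, y} : Set (AdPartition T I)) j →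
          ¬ x ⋖ j := by
  refine ⟨I9, T9, ⟨by decide, by decide⟩, by decide, ⟨px9, adm_px9⟩, ⟨py9, adm_py9⟩,
    ⟨pbot9, adm_pbot9⟩, ?_, ?_, ?_, ?_⟩
  · constructor
    · rintro p (rfl | rfl)
      · exact le_px9
      · exact le_py9
    · intro w hw
      have hwx : w ≤ ⟨px9, adm_px9⟩ := hw (Set.mem_insert _ _)
      have hwy : w ≤ ⟨py9, adm_py9⟩ := hw (Set.mem_insert_of_mem _ rfl)
      rcases classA w.1 hwx with h | h
      · exact le_of_eq (Subtype.ext h)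
      · rcases classB w.1 hwy with h' | h'
        · exact le_of_eq (Subtype.ext h')
        · exact absurd (h ▸ h' : px9 = py9)
            (ne_parts (by decide))
  · refine ⟨lt_of_le_of_ne le_px9 (fun hh => ne_parts (by decide) (congrArg Subtype.val hh) : ¬ _) , ?_⟩
    intro c h1 h2
    rcases classA c.1 h2.le with h | h
    · exact absurd (Subtype.ext h : c = ⟨pbot9, adm_pbot9⟩) (ne_of_gt h1)
    · exact absurd (Subtype.ext h : c = ⟨px9, adm_px9⟩) (ne_of_lt h2)
  · refine ⟨lt_of_le_of_ne le_py9 (fun hh => ne_parts (by decide) (congrArg Subtype.val hh) : ¬ _) , ?_⟩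
    intro c h1 h2
    rcases classB c.1 h2.le with h | h
    · exact absurd (Subtype.ext h : c = ⟨pbot9, adm_pbot9⟩) (ne_of_gt h1)
    · exact absurd (Subtype.ext h : c = ⟨py9, adm_py9⟩) (ne_of_lt h2)
  · intro j hj hcov
    have hxj : (⟨px9, adm_px9⟩ : AdPartition T9 I9) ≤ j := hj.1 (Set.mem_insert _ _)
    have hyj : (⟨py9, adm_py9⟩ : AdPartition T9 I9) ≤ j := hj.1 (Set.mem_insert_of_mem _ rfl)
    have hjtop : j.1 = ptop9 := classC j.1 j.2 hxj hyj
    have hxz : (⟨px9, adm_px9⟩ : AdPartition T9 I9) < ⟨pz9, adm_pz9⟩ :=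
      lt_of_le_of_ne px9_le_pz9 (fun hh => ne_parts (by decide) (congrArg Subtype.val hh))
    have hzj : (⟨pz9, adm_pz9⟩ : AdPartition T9 I9) < j := by
      apply lt_of_le_of_ne
      · show pz9 ≤ j.1
        rw [hjtop]; exact pz9_le_ptop9
      · intro hh
        exact ne_parts (by decide) ((congrArg Subtype.val hh).trans hjtop : pz9 = ptop9)
    exact hcov.2 hxz hzj
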